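/- Let C ⊆ ℝⁿ be a polytope, f convex and differentiable on an open set containing C. If (C, f) satisfies the (μ, θ)-error bound relative to the radial distance r for some μ > 0 and θ ∈ [0, 1/2], then for all x ∈ C, max_{v ∈ C} ⟨∇f(x), x - v⟩ ≥ μ^θ (f(x) - f*)^{1-θ}. -/

import Mathlib

/-- The radial distance on a polytope `C`. -/
noncomputable def radialDist {E : Type*} [NormedAddCommGroup E] [NormedSpace ℝ E]
    (C : Set E) (y x : E) : ℝ :=
  sInf {ρ : ℝ | 0 ≤ ρ ∧ ∃ v ∈ C, y - x = ρ • (v - x)}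

/-- Gradient inequality for convex functions. -/
lemma grad_ineq {E : Type*} [NormedAddCommGroup E] [NormedSpace ℝ E]
    {C : Set E} {f : E → ℝ} {f' : E →L[ℝ] ℝ} {x z : E}
    (hconv : ConvexOn ℝ C f) (hx : x ∈ C) (hz : z ∈ C)
    (hd : HasFDerivAt f f' x) : f' (z - x) ≤ f z - f x := by
  set φ : ℝ → ℝ := fun t => f (x + t • (z - x)) with hφ
  have hmap : ∀ t ∈ Set.Icc (0 : ℝ) 1, x + t • (z - x) ∈ C := by
    intro t ht
    have : x + t • (z - x) ∈ segment ℝ x z := by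
      rw [segment_eq_image']
      exact ⟨t, ht, rfl⟩
    exact hconv.1.segment_subset hx hz this
  have hconvφ : ConvexOn ℝ (Set.Icc (0 : ℝ) 1) φ := by
    constructor
    · exact convex_Icc 0 1
    · intro a ha b hb p q hp hq hpq
      have key := hconv.2 (hmap a ha) (hmap b hb) hp hq hpq
      have : p • (x + a • (z - x)) + q • (x + b • (z - x))
          = x + (p * a + q * b) • (z - x) := by
        rw [smul_add, smul_add, smul_smul, smul_smul, add_smul]
        match_scalars <;> linarith
      rw [this] at key
      exact key
  have hderiv : HasDerivAt φ (f' (z - x)) 0 := by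
    have h1 : HasDerivAt (fun t : ℝ => x + t • (z - x)) (z - x) 0 := by
      have := ((hasDerivAt_id (0 : ℝ)).smul_const (z - x)).const_add x
      simpa using this
    have h2 : HasFDerivAt f f' (x + (0 : ℝ) • (z - x)) := by simpa using hd
    exact h2.comp_hasDerivAt (0 : ℝ) h1
  have := hconvφ.le_slope_of_hasDerivAt (Set.left_mem_Icc.2 zero_le_one)
    (Set.right_mem_Icc.2 zero_le_one) zero_lt_one hderiv
  have hslope : slope φ 0 1 = f z - f x := by
    simp [slope_def_field, hφ]
  rw [hslope] at this
  exact this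

/-- If `(C, f)` satisfies the `(μ, θ)`-error bound relative to the radial distance,
then `max_{v ∈ C} ⟨∇f(x), x - v⟩ ≥ μ^θ (f(x) - f*)^{1-θ}` for all `x ∈ C`. -/
theorem stmt5 {E : Type*} [NormedAddCommGroup E] [NormedSpace ℝ E]
    (V : Finset E) (C : Set E) (hC : C = convexHull ℝ (V : Set E)) (hCne : C.Nonempty)
    (f : E → ℝ) (f' : E → E →L[ℝ] ℝ) (hdiff : ∀ x ∈ C, HasFDerivAt f (f' x) x)
    (hconv : ConvexOn ℝ C f)
    (fstar : ℝ) (hfstar : IsLeast (f '' C) fstar)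
    (Xstar : Set E) (hXstar : Xstar = {z ∈ C | f z = fstar})
    (μ θ : ℝ) (hμ : 0 < μ) (hθ : θ ∈ Set.Icc (0 : ℝ) (1 / 2))
    (heb : ∀ x ∈ C,
      ((f x - fstar) / μ) ^ θ ≥ sInf {d : ℝ | ∃ z ∈ Xstar, d = radialDist C z x}) :
    ∀ x ∈ C,
      sSup {t : ℝ | ∃ v ∈ C, t = f' x (x - v)} ≥ μ ^ θ * (f x - fstar) ^ (1 - θ) := by
  intro x hx
  set T : Set ℝ := {t : ℝ | ∃ v ∈ C, t = f' x (x - v)} with hT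
  have hCcompact : IsCompact C := by
    rw [hC]; exact (V.finite_toSet).isCompact_convexHull ℝ
  have hTeq : T = (fun v => f' x (x - v)) '' C := by
    ext t; simp [hT, Set.mem_image, eq_comm]
  have hTbdd : BddAbove T := by
    rw [hTeq]
    exact (hCcompact.image ((f' x).continuous.comp
      (continuous_const.sub continuous_id))).bddAbove
  have h0T : (0 : ℝ) ∈ T := ⟨x, hx, by simp⟩
  set S := sSup T with hS
  have hS0 : 0 ≤ S := le_csSup hTbdd h0T
  set g := f x - fstar with hg
  have hgnn : 0 ≤ g := sub_nonneg.2 (hfstar.2 ⟨x, hx, rfl⟩)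
  rcases eq_or_lt_of_le hgnn with hg0 | hgpos
  · -- g = 0 case
    have h1θ : (1 : ℝ) - θ ≠ 0 := by
      have := hθ.2; linarith
    rw [← hg0, Real.zero_rpow h1θ, mul_zero]
    exact hS0
  · -- g > 0 case
    -- minimizer exists
    obtain ⟨z0, hz0C, hz0f⟩ := hfstar.1
    have hz0 : z0 ∈ Xstar := by rw [hXstar]; exact ⟨hz0C, hz0f⟩
    -- S > 0
    have hSpos : 0 < S := by
      have hgrad := grad_ineq hconv hx hz0C (hdiff x hx)
      have : g ≤ f' x (x - z0) := by
        have : f' x (x - z0) = -(f' x (z0 - x)) := by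
          rw [← map_neg]; congr 1; abel
        rw [this, hg]; linarith [hgrad, hz0f]
      have hmem : f' x (x - z0) ∈ T := ⟨z0, hz0C, rfl⟩
      calc 0 < g := hgpos
        _ ≤ f' x (x - z0) := this
        _ ≤ S := le_csSup hTbdd hmem
    -- for each z ∈ Xstar, g / S ≤ radialDist C z x
    have key : ∀ z ∈ Xstar, g / S ≤ radialDist C z x := by
      intro z hz
      rw [hXstar] at hz
      obtain ⟨hzC, hzf⟩ := hz
      have hgrad := grad_ineq hconv hx hzC (hdiff x hx)
      have hgle : g ≤ f' x (x - z) := by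
        have : f' x (x - z) = -(f' x (z - x)) := by
          rw [← map_neg]; congr 1; abel
        rw [this, hg]; linarith [hgrad, hzf]
      unfold radialDist
      have hne : {ρ : ℝ | 0 ≤ ρ ∧ ∃ v ∈ C, z - x = ρ • (v - x)}.Nonempty :=
        ⟨1, zero_le_one, z, hzC, by simp⟩
      apply le_csInf hne
      rintro ρ ⟨hρ0, v, hvC, hveq⟩
      rw [div_le_iff₀ hSpos]
      have h1 : x - z = ρ • (x - v) := by
        have : x - z = -(z - x) := by abel
        rw [this, hveq, ← smul_neg]; congr 1; abel
      have h2 : f' x (x - z) = ρ * f' x (x - v) := by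
        rw [h1, map_smul]; rfl
      have h3 : f' x (x - v) ≤ S := le_csSup hTbdd ⟨v, hvC, rfl⟩
      calc g ≤ f' x (x - z) := hgle
        _ = ρ * f' x (x - v) := h2
        _ ≤ ρ * S := mul_le_mul_of_nonneg_left h3 hρ0
    -- g / S ≤ (g/μ)^θ
    have hDne : {d : ℝ | ∃ z ∈ Xstar, d = radialDist C z x}.Nonempty :=
      ⟨radialDist C z0 x, z0, hz0, rfl⟩
    have hlow : g / S ≤ sInf {d : ℝ | ∃ z ∈ Xstar, d = radialDist C z x} := by
      apply le_csInf hDne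
      rintro d ⟨z, hz, rfl⟩
      exact key z hz
    have hmain : g / S ≤ (g / μ) ^ θ := le_trans hlow (heb x hx)
    have hApos : 0 < (g / μ) ^ θ := Real.rpow_pos_of_pos (div_pos hgpos hμ) θ
    -- conclude
    have hfin : g / (g / μ) ^ θ ≤ S := by
      rw [div_le_iff₀ hApos]
      rw [div_le_iff₀ hSpos] at hmain
      linarith [hmain]
    calc μ ^ θ * g ^ (1 - θ) = g / (g / μ) ^ θ := by
          rw [Real.div_rpow hgnn hμ.le, Real.rpow_sub hgpos, Real.rpow_one]
          field_simp
      _ ≤ S := hfin
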